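/- The family W = {w_S : ∅ ≠ S ⊆ N} is a basis of the vector space of TU games on N, where w_S = e_S (the identity game of S) if |S| < k and w_S = u_S (the unanimity game of S) if |S| ≥ k. -/
import Mathlib


open Finset

/-- The basis game `w_S`: the identity game `e_S` if `|S| < k`,
and the unanimity game `u_S` if `|S| ≥ k`. -/
noncomputable def wGame (n k : ℕ) (S : Finset (Fin n)) : Finset (Fin n) → ℝ :=
  fun T => if S.card < k then (if T = S then 1 else 0) else (if S ⊆ T then 1 else 0)

lemma wGame_self (n k : ℕ) (S : Finset (Fin n)) : wGame n k S S = 1 := by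
  unfold wGame; split <;> simp

lemma wGame_subset (n k : ℕ) {S T : Finset (Fin n)} (h : wGame n k S T ≠ 0) : S ⊆ T := by
  unfold wGame at h
  split at h
  · split at h
    · subst ‹T = S›; exact subset_rfl
    · exact absurd rfl h
  · split at h
    · assumption
    · exact absurd rfl h

lemma wGame_linearIndependent (n k : ℕ) :
    LinearIndependent ℝ (fun S : {S : Finset (Fin n) // S ≠ ∅} => wGame n k S.1) := by
  rw [linearIndependent_iff']
  intro s g h i hi
  by_contra hne
  -- choose among nonzero-coefficient indices one of minimal cardinality
  set t := s.filter (fun j => g j ≠ 0) with ht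
  have htne : t.Nonempty := ⟨i, by simp [ht, hi, hne]⟩
  obtain ⟨m, hmt, hmin⟩ := Finset.exists_min_image t (fun j => j.1.card) htne
  have hms : m ∈ s := (Finset.mem_filter.mp hmt).1
  have hgm : g m ≠ 0 := (Finset.mem_filter.mp hmt).2
  have := congrFun h m.1
  simp only [Finset.sum_apply, Pi.smul_apply, smul_eq_mul, Pi.zero_apply] at this
  rw [Finset.sum_eq_single m] at this
  · rw [wGame_self] at this
    exact hgm (by linarith)
  · intro j hjs hjm
    by_cases hgj : g j = 0
    · simp [hgj]
    · have hjt : j ∈ t := Finset.mem_filter.mpr ⟨hjs, hgj⟩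
      by_cases hw : wGame n k j.1 m.1 = 0
      · simp [hw]
      · have hsub := wGame_subset n k hw
        have hcard := hmin j hjt
        have : j.1 = m.1 := Finset.eq_of_subset_of_card_le hsub hcard
        exact absurd (Subtype.ext this) hjm
  · intro hm; exact absurd hms hm

/-- the family `{w_S : ∅ ≠ S ⊆ N}` is a basis of the space of TU games,
i.e. it is linearly independent and spans the subspace of functions vanishing at `∅`. -/
theorem wGame_basis (n k : ℕ) (hn : 1 ≤ n) (hk : 1 ≤ k) (hkn : k ≤ n) :
    LinearIndependent ℝ (fun S : {S : Finset (Fin n) // S ≠ ∅} => wGame n k S.1) ∧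
    Submodule.span ℝ (Set.range (fun S : {S : Finset (Fin n) // S ≠ ∅} => wGame n k S.1)) =
      LinearMap.ker (LinearMap.proj (∅ : Finset (Fin n)) :
        (Finset (Fin n) → ℝ) →ₗ[ℝ] ℝ) := by
  have hli := wGame_linearIndependent n k
  refine ⟨hli, ?_⟩
  set f : (Finset (Fin n) → ℝ) →ₗ[ℝ] ℝ :=
    (LinearMap.proj (∅ : Finset (Fin n)) : (Finset (Fin n) → ℝ) →ₗ[ℝ] ℝ) with hf
  -- the span is contained in the kernel
  have hle : Submodule.span ℝ (Set.range (fun S : {S : Finset (Fin n) // S ≠ ∅} =>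
      wGame n k S.1)) ≤ LinearMap.ker f := by
    rw [Submodule.span_le]
    rintro _ ⟨S, rfl⟩
    simp only [SetLike.mem_coe, LinearMap.mem_ker, hf, LinearMap.proj_apply]
    unfold wGame
    split
    · rw [if_neg (Ne.symm S.2)]
    · rw [if_neg (fun h => S.2 (Finset.subset_empty.mp h))]
  -- dimension count
  have hsurj : Function.Surjective f := fun x => ⟨fun _ => x, rfl⟩
  have htot : Module.finrank ℝ (Finset (Fin n) → ℝ) = 2 ^ n := by
    rw [Module.finrank_pi]
    simp
  have hrange : Module.finrank ℝ (LinearMap.range f) = 1 := by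
    rw [LinearMap.range_eq_top.mpr hsurj]
    simpa using Module.finrank_self ℝ
  have hker : Module.finrank ℝ (LinearMap.ker f) = 2 ^ n - 1 := by
    have := LinearMap.finrank_range_add_finrank_ker f
    omega
  have hcardidx : Fintype.card {S : Finset (Fin n) // S ≠ ∅} = 2 ^ n - 1 := by
    have : Fintype.card {S : Finset (Fin n) // S = ∅} = 1 := Fintype.card_subtype_eq ∅
    have h2 := Fintype.card_subtype_compl (fun S : Finset (Fin n) => S = ∅)
    simp only [this] at h2
    rw [h2]
    simp
  have hspan : Module.finrank ℝ (Submodule.span ℝ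
      (Set.range (fun S : {S : Finset (Fin n) // S ≠ ∅} => wGame n k S.1))) = 2 ^ n - 1 := by
    rw [finrank_span_eq_card hli, hcardidx]
  exact Submodule.eq_of_le_of_finrank_eq hle (by rw [hspan, hker])
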